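/- Fix a nonzero real number λ and an integer r ≥ 0. Let f(x) = Σ_{n=0}^{d} a_n x^n be a real polynomial and let g(x) = Σ_{n=0}^{∞} b_n x^n ∈ ℝ[[x]] be a formal power series. Define f_λ(y) = Σ_{n=0}^{d} a_n (y)_{n,λ}. Then the following identity holds in ℝ[[x]]: Σ_{n=0}^{d} a_n Σ_{k=0}^{n} {n+r brace k+r}_{r,λ} x^k g^{(k)}(x) = Σ_{n=0}^{∞} b_n f_λ(n+r) x^n, where g^{(k)} is the k-th formal derivative of g. -/

import Mathlib

open Finset PowerSeries

noncomputable section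

/-- The degenerate falling factorial `(x)_{n,λ} = x(x-λ)⋯(x-(n-1)λ)`. -/
def dff (lam x : ℝ) (n : ℕ) : ℝ := ∏ i ∈ Finset.range n, (x - i * lam)

/-- The ordinary falling factorial `(x)_n = x(x-1)⋯(x-n+1)`. -/
def ff (x : ℝ) (n : ℕ) : ℝ := ∏ i ∈ Finset.range n, (x - i)

lemma coeff_iter_deriv (g : PowerSeries ℝ) (k j : ℕ) :
    PowerSeries.coeff j ((derivativeFun (R := ℝ))^[k] g) =
      (∏ i ∈ Finset.range k, ((j : ℝ) + i + 1)) * PowerSeries.coeff (j + k) g := by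
  induction k generalizing g with
  | zero => simp
  | succ k ih =>
    rw [Function.iterate_succ_apply, ih, (show coeff (j + k) g.derivativeFun = coeff (j + k + 1) g * (((j + k : ℕ) : ℝ) + 1) from coeff_derivative g (j + k)), Finset.prod_range_succ,
      show j + (k + 1) = j + k + 1 from rfl]
    push_cast
    ring

lemma key (g : PowerSeries ℝ) (k m : ℕ) :
    PowerSeries.coeff m (PowerSeries.X ^ k * (derivativeFun (R := ℝ))^[k] g) =
      ff (m : ℝ) k * PowerSeries.coeff m g := by
  rcases le_or_gt k m with h | h
  · obtain ⟨j, rfl⟩ := Nat.exists_eq_add_of_le h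
    rw [Nat.add_comm k j, PowerSeries.coeff_X_pow_mul, coeff_iter_deriv]
    congr 1
    unfold ff
    rw [← Finset.prod_range_reflect]
    apply Finset.prod_congr rfl
    intro i hi
    simp only [Finset.mem_range] at hi
    have h1 : ((k - 1 - i : ℕ) : ℝ) = (k : ℝ) - 1 - i := by
      push_cast [Nat.cast_sub (by omega : i ≤ k - 1), Nat.cast_sub (by omega : 1 ≤ k)]
      ring
    push_cast [h1]
    ring
  · have h1 : PowerSeries.coeff m (PowerSeries.X ^ k * (derivativeFun (R := ℝ))^[k] g) = 0 := by
      rw [PowerSeries.coeff_X_pow_mul']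
      simp [Nat.not_le.mpr h]
    have h2 : ff (m : ℝ) k = 0 := by
      unfold ff
      apply Finset.prod_eq_zero (Finset.mem_range.mpr h)
      simp
    rw [h1, h2, zero_mul]

/-- for a polynomial `f(x) = ∑_{n=0}^d a_n x^n` and a power series `g`,
`∑_{n=0}^d a_n ∑_{k=0}^n {n+r brace k+r}_{r,λ} x^k g^{(k)}(x) = ∑_{n=0}^∞ b_n f_λ(n+r) x^n`,
where `b_n` is the `n`-th coefficient of `g`, `f_λ(y) = ∑_{n=0}^d a_n (y)_{n,λ}`, and
`S n k` denotes the degenerate `r`-Stirling number of the second kind `{n+r brace k+r}_{r,λ}`,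
characterized by `(x+r)_{n,λ} = ∑_{k=0}^n S n k (x)_k`. -/
theorem statement_2 (lam : ℝ) (hlam : lam ≠ 0) (r : ℕ)
    (S : ℕ → ℕ → ℝ)
    (hS : ∀ (n : ℕ) (x : ℝ), dff lam (x + r) n = ∑ k ∈ Finset.range (n + 1), S n k * ff x k)
    (d : ℕ) (a : ℕ → ℝ) (g : PowerSeries ℝ) :
    ∑ n ∈ Finset.range (d + 1), a n •
        ∑ k ∈ Finset.range (n + 1),
          S n k • (PowerSeries.X ^ k * (derivativeFun (R := ℝ))^[k] g) =
      PowerSeries.mk fun n =>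
        (PowerSeries.coeff n g) *
          ∑ m ∈ Finset.range (d + 1), a m * dff lam ((n : ℝ) + r) m := by
  ext j
  simp only [map_sum, PowerSeries.coeff_smul, coeff_mk, smul_eq_mul, key]
  rw [Finset.mul_sum]
  apply Finset.sum_congr rfl
  intro n _
  rw [hS n j, Finset.mul_sum, Finset.mul_sum, Finset.mul_sum]
  apply Finset.sum_congr rfl
  intro k _
  ring
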